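/- Let A be a unital C*-algebra carrying compatible systems of matrix units e^{(i)}_{j;s,t} as described, such that A is the norm closure of the union of the linear spans A_i of the level-i matrix units, and suppose A is infinite-dimensional and simple. For i < i', 1 ≤ j' ≤ K_i, and 1 ≤ j ≤ K_{i'}, define the multiplicity m_{i,i';j',j} to be the number of indices s ∈ {1,…,n_{i',j}} such that e^{(i')}_{j;s,s} e^{(i)}_{j';1,1} = e^{(i')}_{j;s,s}. Then for every i_0 ∈ ℕ and every N ∈ ℕ there exists i > i_0 such that m_{i_0,i;j',j} > N for all 1 ≤ j' ≤ K_{i_0} and all 1 ≤ j ≤ K_i. -/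

import Mathlib

/-- A compatible tower of systems of matrix units in a unital C*-algebra `B`.
At level `i` there are `K i` summands, the `j`-th of which has matrix units
`e i j s t` (`s, t : Fin (n i j)`); the level-`i` units are sums of level-`(i+1)`
units according to the injections `L` (with multiplicities `m`), whose images are
pairwise disjoint and cover each `Fin (n (i+1) j)` (encoded as bijectivity of the
associated map on sigma types). -/
structure MatrixUnitTower (B : Type*) [CStarAlgebra B] where
  K : ℕ → ℕ
  K_pos : ∀ i, 0 < K i
  n : (i : ℕ) → Fin (K i) → ℕ
  n_pos : ∀ i j, 0 < n i j
  e : (i : ℕ) → (j : Fin (K i)) → Fin (n i j) → Fin (n i j) → B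
  e_ne_zero : ∀ i j s t, e i j s t ≠ 0
  e_mul_same : ∀ i j s t u w, e i j s t * e i j u w = if t = u then e i j s w else 0
  e_mul_ne : ∀ i (j j' : Fin (K i)), j ≠ j' → ∀ s t u w, e i j s t * e i j' u w = 0
  e_star : ∀ i j s t, star (e i j s t) = e i j t s
  sum_diag_eq_one : ∀ i, ∑ j, ∑ s, e i j s s = (1 : B)
  m : (i : ℕ) → Fin (K i) → Fin (K (i + 1)) → ℕ
  L : (i : ℕ) → (j' : Fin (K i)) → (j : Fin (K (i + 1))) → Fin (m i j' j) →
      Fin (n i j') → Fin (n (i + 1) j)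
  L_bij : ∀ (i : ℕ) (j : Fin (K (i + 1))),
    Function.Bijective (fun x : Σ j' : Fin (K i), Fin (m i j' j) × Fin (n i j') =>
      L i x.1 j x.2.1 x.2.2)
  e_compat : ∀ (i : ℕ) (j' : Fin (K i)) (l k : Fin (n i j')),
    e i j' l k = ∑ j : Fin (K (i + 1)), ∑ t : Fin (m i j' j),
      e (i + 1) j (L i j' j t l) (L i j' j t k)



namespace MatrixUnitTower
variable {A : Type*} [CStarAlgebra A] (T : MatrixUnitTower A)

/-- The span of the level-`i` matrix units. -/
noncomputable def lvl (i : ℕ) : Submodule ℂ A := Submodule.span ℂ {x : A | ∃ j s t, x = T.e i j s t}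

/-- Iterated image of a family of index sets up the tower. -/
def G (a : ℕ) (G0 : ∀ j : Fin (T.K a), Finset (Fin (T.n a j))) :
    (k : ℕ) → (j : Fin (T.K (a + k))) → Finset (Fin (T.n (a + k) j))
  | 0 => G0
  | (k+1) => fun j => Finset.image
      (fun x : Σ j'' : Fin (T.K (a+k)), Fin (T.m (a+k) j'' j) × Fin (T.n (a+k) j'') =>
        T.L (a+k) x.1 j x.2.1 x.2.2)
      (Finset.univ.sigma (fun j'' => Finset.univ ×ˢ G a G0 k j''))

theorem G_sum (a : ℕ) (G0 : ∀ j : Fin (T.K a), Finset (Fin (T.n a j))) (k : ℕ) :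
    ∑ j, ∑ s ∈ T.G a G0 k j, T.e (a+k) j s s = ∑ j, ∑ s ∈ G0 j, T.e a j s s := by
  induction k with
  | zero => rfl
  | succ k ih =>
    rw [← ih]
    have inj : ∀ j : Fin (T.K (a+k+1)), Function.Injective
        (fun x : Σ j'' : Fin (T.K (a+k)), Fin (T.m (a+k) j'' j) × Fin (T.n (a+k) j'') =>
          T.L (a+k) x.1 j x.2.1 x.2.2) := fun j => (T.L_bij (a+k) j).1
    calc ∑ j, ∑ s ∈ T.G a G0 (k+1) j, T.e (a+k+1) j s s
        = ∑ j : Fin (T.K (a+k+1)),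
            ∑ x ∈ (Finset.univ.sigma (fun j'' : Fin (T.K (a+k)) =>
              (Finset.univ : Finset (Fin (T.m (a+k) j'' j))) ×ˢ T.G a G0 k j'')),
            T.e (a+k+1) j (T.L (a+k) x.1 j x.2.1 x.2.2) (T.L (a+k) x.1 j x.2.1 x.2.2) := by
          refine Finset.sum_congr rfl fun j _ => ?_
          exact Finset.sum_image (fun x _ y _ h => inj j h)
      _ = ∑ j : Fin (T.K (a+k+1)), ∑ j'' : Fin (T.K (a+k)),
            ∑ y ∈ (Finset.univ : Finset (Fin (T.m (a+k) j'' j))) ×ˢ T.G a G0 k j'',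
            T.e (a+k+1) j (T.L (a+k) j'' j y.1 y.2) (T.L (a+k) j'' j y.1 y.2) := by
          refine Finset.sum_congr rfl fun j _ => ?_
          rw [Finset.sum_sigma]
      _ = ∑ j : Fin (T.K (a+k+1)), ∑ j'' : Fin (T.K (a+k)), ∑ t, ∑ s ∈ T.G a G0 k j'',
            T.e (a+k+1) j (T.L (a+k) j'' j t s) (T.L (a+k) j'' j t s) := by
          refine Finset.sum_congr rfl fun j _ => Finset.sum_congr rfl fun j'' _ => ?_
          rw [Finset.sum_product]
      _ = ∑ j'' : Fin (T.K (a+k)), ∑ s ∈ T.G a G0 k j'', ∑ j : Fin (T.K (a+k+1)), ∑ t,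
            T.e (a+k+1) j (T.L (a+k) j'' j t s) (T.L (a+k) j'' j t s) := by
          rw [Finset.sum_comm]
          refine Finset.sum_congr rfl fun j'' _ => ?_
          rw [Finset.sum_comm]
          refine Finset.sum_congr rfl fun j _ => ?_
          rw [Finset.sum_comm]
      _ = ∑ j'' : Fin (T.K (a+k)), ∑ s ∈ T.G a G0 k j'', T.e (a+k) j'' s s := by
          refine Finset.sum_congr rfl fun j'' _ => Finset.sum_congr rfl fun s _ => ?_
          exact (T.e_compat (a+k) j'' s s).symm

theorem mem_sigmaSet {a : ℕ} {G0 : ∀ j : Fin (T.K a), Finset (Fin (T.n a j))} {k : ℕ}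
    {j : Fin (T.K (a+k+1))}
    {x : Σ j'' : Fin (T.K (a+k)), Fin (T.m (a+k) j'' j) × Fin (T.n (a+k) j'')} :
    x ∈ (Finset.univ.sigma (fun j'' : Fin (T.K (a+k)) =>
      (Finset.univ : Finset (Fin (T.m (a+k) j'' j))) ×ˢ T.G a G0 k j'')) ↔
      x.2.2 ∈ T.G a G0 k x.1 := by
  cases x with
  | mk j'' y =>
    simp [Finset.mem_sigma, Finset.mem_product]

theorem G_succ_card (a : ℕ) (G0 : ∀ j : Fin (T.K a), Finset (Fin (T.n a j))) (k : ℕ)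
    (j : Fin (T.K (a+k+1))) :
    (T.G a G0 (k+1) j).card = ∑ j'' : Fin (T.K (a+k)), T.m (a+k) j'' j * (T.G a G0 k j'').card := by
  show (Finset.image _ _).card = _
  rw [Finset.card_image_of_injective _ ((T.L_bij (a+k) j).1), Finset.card_sigma]
  simp [Finset.card_product]

theorem n_succ (i : ℕ) (j : Fin (T.K (i+1))) :
    T.n (i+1) j = ∑ j'' : Fin (T.K i), T.m i j'' j * T.n i j'' := by
  have := Fintype.card_of_bijective (T.L_bij i j)
  simp [Fintype.card_sigma] at this
  omega

theorem G_nonempty_succ {a : ℕ} {G0 : ∀ j : Fin (T.K a), Finset (Fin (T.n a j))} {k : ℕ}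
    (h : ∀ j'', (T.G a G0 k j'').Nonempty) (j : Fin (T.K (a+k+1))) :
    (T.G a G0 (k+1) j).Nonempty := by
  have hsurj := (T.L_bij (a+k) j).2
  obtain ⟨x₀, -⟩ := hsurj (Fin.mk 0 (T.n_pos (a+k+1) j))
  obtain ⟨s₁, hs₁⟩ := h x₀.1
  exact ⟨_, Finset.mem_image_of_mem _
    ((T.mem_sigmaSet (x := ⟨x₀.1, (x₀.2.1, s₁)⟩)).2 hs₁)⟩

theorem G_nonempty_le {a : ℕ} {G0 : ∀ j : Fin (T.K a), Finset (Fin (T.n a j))} {k k' : ℕ}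
    (hk : k ≤ k') (h : ∀ j'', (T.G a G0 k j'').Nonempty) :
    ∀ j, (T.G a G0 k' j).Nonempty := by
  induction k' with
  | zero =>
    have hk0 : k = 0 := Nat.le_zero.1 hk
    subst hk0; exact h
  | succ k' ih =>
    rcases Nat.lt_or_ge k (k'+1) with h' | h'
    · exact T.G_nonempty_succ (ih (Nat.lt_succ_iff.1 h'))
    · have hk0 : k = k' + 1 := Nat.le_antisymm hk h'
      subst hk0; exact h

theorem G_disjoint {a : ℕ} {G0 H0 : ∀ j : Fin (T.K a), Finset (Fin (T.n a j))}
    (h : ∀ j, Disjoint (G0 j) (H0 j)) :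
    ∀ k j, Disjoint (T.G a G0 k j) (T.G a H0 k j) := by
  intro k
  induction k with
  | zero => exact h
  | succ k ih =>
    intro j
    refine Finset.disjoint_image ((T.L_bij (a+k) j).1) |>.2 ?_
    rw [Finset.disjoint_left]
    intro x hx hx'
    exact Finset.disjoint_left.1 (ih x.1) (T.mem_sigmaSet.1 hx) (T.mem_sigmaSet.1 hx')

theorem e_mul_diagSum (ℓ : ℕ) (Gf : ∀ j : Fin (T.K ℓ), Finset (Fin (T.n ℓ j)))
    (j : Fin (T.K ℓ)) (s t : Fin (T.n ℓ j)) :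
    T.e ℓ j s t * (∑ j', ∑ u ∈ Gf j', T.e ℓ j' u u) =
      if t ∈ Gf j then T.e ℓ j s t else 0 := by
  rw [Finset.mul_sum]
  rw [Finset.sum_eq_single j]
  · rw [Finset.mul_sum]
    have : ∀ u ∈ Gf j, T.e ℓ j s t * T.e ℓ j u u = if t = u then T.e ℓ j s u else 0 :=
      fun u _ => T.e_mul_same ℓ j s t u u
    rw [Finset.sum_congr rfl this, Finset.sum_ite_eq]
  · intro j' _ hj'
    rw [Finset.mul_sum]
    refine Finset.sum_eq_zero fun u _ => T.e_mul_ne ℓ j j' (Ne.symm hj') s t u u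
  · intro h; exact absurd (Finset.mem_univ j) h

theorem diag_mul_e (ℓ : ℕ) (j : Fin (T.K ℓ)) (s t : Fin (T.n ℓ j)) :
    (∑ u, T.e ℓ j u u) * T.e ℓ j s t = T.e ℓ j s t := by
  rw [Finset.sum_mul]
  have : ∀ u ∈ (Finset.univ : Finset (Fin (T.n ℓ j))),
      T.e ℓ j u u * T.e ℓ j s t = if u = s then T.e ℓ j u t else 0 :=
    fun u _ => T.e_mul_same ℓ j u u s t
  rw [Finset.sum_congr rfl this, Finset.sum_ite_eq', if_pos (Finset.mem_univ s)]

theorem diag_mul_e_ne (ℓ : ℕ) {j j' : Fin (T.K ℓ)} (h : j ≠ j') (s t : Fin (T.n ℓ j')) :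
    (∑ u, T.e ℓ j u u) * T.e ℓ j' s t = 0 := by
  rw [Finset.sum_mul]
  exact Finset.sum_eq_zero fun u _ => T.e_mul_ne ℓ j j' h u u s t

theorem norm_eq_one_of_proj {r : A} (h1 : star r * r = r) (h2 : r ≠ 0) : ‖r‖ = 1 := by
  have h3 : ‖star r * r‖ = ‖r‖ * ‖r‖ := CStarRing.norm_star_mul_self
  rw [h1] at h3
  have hn : ‖r‖ ≠ 0 := norm_ne_zero_iff.2 h2
  have : ‖r‖ * 1 = ‖r‖ * ‖r‖ := by rw [mul_one]; exact h3
  exact (mul_left_cancel₀ hn this).symm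

theorem diag_proj (ℓ : ℕ) (j : Fin (T.K ℓ)) :
    star (∑ u, T.e ℓ j u u) * (∑ u, T.e ℓ j u u) = ∑ u, T.e ℓ j u u := by
  have hstar : star (∑ u, T.e ℓ j u u) = ∑ u, T.e ℓ j u u := by
    rw [star_sum]
    exact Finset.sum_congr rfl fun u _ => T.e_star ℓ j u u
  rw [hstar, Finset.mul_sum]
  exact Finset.sum_congr rfl fun u _ => T.diag_mul_e ℓ j u u

theorem diag_ne_zero (ℓ : ℕ) (j : Fin (T.K ℓ)) : (∑ u, T.e ℓ j u u) ≠ 0 := by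
  intro h
  have := T.diag_mul_e ℓ j ⟨0, T.n_pos ℓ j⟩ ⟨0, T.n_pos ℓ j⟩
  rw [h, zero_mul] at this
  exact T.e_ne_zero ℓ j _ _ this.symm

theorem norm_diag (ℓ : ℕ) (j : Fin (T.K ℓ)) : ‖∑ u, T.e ℓ j u u‖ = 1 :=
  norm_eq_one_of_proj (T.diag_proj ℓ j) (T.diag_ne_zero ℓ j)

theorem e_proj (ℓ : ℕ) (j : Fin (T.K ℓ)) (s : Fin (T.n ℓ j)) :
    star (T.e ℓ j s s) * T.e ℓ j s s = T.e ℓ j s s := by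
  rw [T.e_star, T.e_mul_same, if_pos rfl]

theorem norm_e_diag (ℓ : ℕ) (j : Fin (T.K ℓ)) (s : Fin (T.n ℓ j)) : ‖T.e ℓ j s s‖ = 1 :=
  norm_eq_one_of_proj (T.e_proj ℓ j s) (T.e_ne_zero ℓ j s s)

theorem lvl_mono : Monotone T.lvl := by
  refine monotone_nat_of_le_succ fun i => ?_
  rw [lvl, Submodule.span_le]
  rintro x ⟨j, s, t, rfl⟩
  rw [T.e_compat i j s t]
  exact Submodule.sum_mem _ fun j' _ => Submodule.sum_mem _ fun u _ =>
    Submodule.subset_span ⟨j', _, _, rfl⟩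

/-- Singleton base family concentrated at the index `α`. -/
def bse (a : ℕ) (α : Σ j : Fin (T.K a), Fin (T.n a j)) (j : Fin (T.K a)) :
    Finset (Fin (T.n a j)) :=
  Finset.univ.filter (fun s => (⟨j, s⟩ : Σ j : Fin (T.K a), Fin (T.n a j)) = α)

theorem mem_bse {a : ℕ} {α : Σ j : Fin (T.K a), Fin (T.n a j)} {j : Fin (T.K a)}
    {s : Fin (T.n a j)} :
    s ∈ T.bse a α j ↔ (⟨j, s⟩ : Σ j : Fin (T.K a), Fin (T.n a j)) = α := by
  simp [bse]

theorem bse_disjoint {a : ℕ} {α β : Σ j : Fin (T.K a), Fin (T.n a j)} (h : α ≠ β)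
    (j : Fin (T.K a)) : Disjoint (T.bse a α j) (T.bse a β j) := by
  rw [Finset.disjoint_left]
  intro s hs hs'
  exact h ((T.mem_bse.1 hs).symm.trans (T.mem_bse.1 hs'))

theorem bse_sum (a : ℕ) (α : Σ j : Fin (T.K a), Fin (T.n a j)) :
    ∑ j, ∑ s ∈ T.bse a α j, T.e a j s s = T.e a α.1 α.2 α.2 := by
  rw [← Finset.sum_sigma (Finset.univ) (T.bse a α) (fun x => T.e a x.1 x.2 x.2)]
  have : Finset.univ.sigma (T.bse a α) = {α} := by
    ext x
    cases x with
    | mk j s =>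
      simp only [Finset.mem_sigma, Finset.mem_univ, true_and, Finset.mem_singleton]
      exact T.mem_bse
  rw [this, Finset.sum_singleton]

theorem e_eq_G_sum (a : ℕ) (α : Σ j : Fin (T.K a), Fin (T.n a j)) (k : ℕ) :
    T.e a α.1 α.2 α.2 = ∑ j, ∑ s ∈ T.G a (T.bse a α) k j, T.e (a+k) j s s := by
  rw [T.G_sum a (T.bse a α) k, T.bse_sum a α]

theorem connectivity
    (hA_eq : closure (⋃ i : ℕ,
      (Submodule.span ℂ {x : A | ∃ j s t, x = T.e i j s t} : Set A)) = Set.univ)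
    (hA_simple : ∀ I : TwoSidedIdeal A, IsClosed (I : Set A) → I = ⊥ ∨ I = ⊤)
    (a : ℕ) (α : Σ j : Fin (T.K a), Fin (T.n a j)) :
    ∃ k, 1 ≤ k ∧ ∀ j, (T.G a (T.bse a α) k j).Nonempty := by
  by_contra hcon
  push_neg at hcon
  set p : A := T.e a α.1 α.2 α.2 with hp_def
  have hp_norm : ‖p‖ = 1 := T.norm_e_diag a α.1 α.2
  have hA_eq' : closure (⋃ i : ℕ, ((T.lvl i : Submodule ℂ A) : Set A)) = Set.univ := hA_eq
  set S : Submodule ℂ A := Submodule.span ℂ {x : A | ∃ b c : A, x = b * p * c} with hS_def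
  have hS_left : ∀ (z x : A), x ∈ S → z * x ∈ S := by
    intro z x hx
    induction hx using Submodule.span_induction with
    | mem w hw =>
      obtain ⟨b, c, rfl⟩ := hw
      exact Submodule.subset_span ⟨z * b, c, by rw [mul_assoc, mul_assoc, mul_assoc]⟩
    | zero => rw [mul_zero]; exact S.zero_mem
    | add x y hx hy ihx ihy => rw [mul_add]; exact S.add_mem ihx ihy
    | smul c x hx ih => rw [mul_smul_comm]; exact S.smul_mem c ih
  have hS_right : ∀ (z x : A), x ∈ S → x * z ∈ S := by
    intro z x hx
    induction hx using Submodule.span_induction with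
    | mem w hw =>
      obtain ⟨b, c, rfl⟩ := hw
      exact Submodule.subset_span ⟨b, c * z, mul_assoc (b * p) c z⟩
    | zero => rw [zero_mul]; exact S.zero_mem
    | add x y hx hy ihx ihy => rw [add_mul]; exact S.add_mem ihx ihy
    | smul c x hx ih => rw [smul_mul_assoc]; exact S.smul_mem c ih
  set Scl := S.topologicalClosure with hScl_def
  have hScl_left : ∀ (z x : A), x ∈ Scl → z * x ∈ Scl := by
    intro z x hx
    have hcont : Continuous fun y : A => z * y := continuous_const.mul continuous_id
    have h1 : z * x ∈ (fun y : A => z * y) '' closure (S : Set A) := ⟨x, hx, rfl⟩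
    have h2 := image_closure_subset_closure_image hcont h1
    refine closure_mono ?_ h2
    rintro w ⟨y, hy, rfl⟩
    exact hS_left z y hy
  have hScl_right : ∀ (z x : A), x ∈ Scl → x * z ∈ Scl := by
    intro z x hx
    have hcont : Continuous fun y : A => y * z := continuous_id.mul continuous_const
    have h1 : x * z ∈ (fun y : A => y * z) '' closure (S : Set A) := ⟨x, hx, rfl⟩
    have h2 := image_closure_subset_closure_image hcont h1
    refine closure_mono ?_ h2
    rintro w ⟨y, hy, rfl⟩
    exact hS_right z y hy
  set I : TwoSidedIdeal A := TwoSidedIdeal.mk' (Scl : Set A) Scl.zero_mem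
    (fun hx hy => Scl.add_mem hx hy) (fun hx => Scl.neg_mem hx)
    (fun {x y} hy => hScl_left x y hy) (fun {x y} hx => hScl_right y x hx) with hI_def
  have hI_mem : ∀ x : A, x ∈ I ↔ x ∈ Scl := fun x =>
    TwoSidedIdeal.mem_mk' _ _ _ _ _ _ x
  have hI_closed : IsClosed (I : Set A) := by
    rw [hI_def, TwoSidedIdeal.coe_mk']
    exact S.isClosed_topologicalClosure
  have hp_mem : p ∈ I := (hI_mem p).2 <| S.le_topologicalClosure <|
    Submodule.subset_span ⟨1, 1, by rw [one_mul, mul_one]⟩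
  have hI_ne_bot : I ≠ ⊥ := by
    intro h
    rw [h, TwoSidedIdeal.mem_bot] at hp_mem
    exact T.e_ne_zero a α.1 α.2 α.2 hp_mem
  have hI_top : I = ⊤ := (hA_simple I hI_closed).resolve_left hI_ne_bot
  have h1_mem : (1 : A) ∈ closure (S : Set A) := by
    have : (1 : A) ∈ I := hI_top ▸ TwoSidedIdeal.mem_top A
    exact (hI_mem 1).1 this
  have hp_diag : ∀ k, p = ∑ j, ∑ s ∈ T.G a (T.bse a α) k j, T.e (a+k) j s s :=
    fun k => T.e_eq_G_sum a α k
  have hTmono : ∀ k k', k ≤ k' →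
      Submodule.span ℂ {z : A | ∃ b ∈ T.lvl (a+k), ∃ c ∈ T.lvl (a+k), z = b * p * c} ≤
      Submodule.span ℂ {z : A | ∃ b ∈ T.lvl (a+k'), ∃ c ∈ T.lvl (a+k'), z = b * p * c} := by
    intro k k' hk
    apply Submodule.span_mono
    rintro z ⟨b, hb, c, hc, rfl⟩
    exact ⟨b, T.lvl_mono (by omega) hb, c, T.lvl_mono (by omega) hc, rfl⟩
  have hdense : ∀ (b : A) (δ : ℝ), 0 < δ → ∃ i₁ : ℕ, ∃ b' ∈ T.lvl i₁, ‖b - b'‖ < δ := by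
    intro b δ hδ
    have hb : b ∈ closure (⋃ i, ((T.lvl i : Submodule ℂ A) : Set A)) := by
      rw [hA_eq']; trivial
    rw [Metric.mem_closure_iff] at hb
    obtain ⟨b', hb', hdist⟩ := hb δ hδ
    rw [Set.mem_iUnion] at hb'
    obtain ⟨i₁, hi₁⟩ := hb'
    exact ⟨i₁, b', hi₁, by rwa [← dist_eq_norm]⟩
  have key : ∀ x ∈ S, ∀ ε : ℝ, 0 < ε → ∃ k, 1 ≤ k ∧ ∃ y ∈ Submodule.span ℂ
      {z : A | ∃ b ∈ T.lvl (a+k), ∃ c ∈ T.lvl (a+k), z = b * p * c}, ‖x - y‖ < ε := by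
    intro x hx
    induction hx using Submodule.span_induction with
    | mem w hw =>
      obtain ⟨b, c, rfl⟩ := hw
      intro ε hε
      have hden : (0:ℝ) < ‖b‖ + ‖c‖ + 2 := by positivity
      set δ : ℝ := min 1 (ε / (‖b‖ + ‖c‖ + 2)) with hδdef
      have hδpos : 0 < δ := lt_min one_pos (div_pos hε hden)
      have hδ1 : δ ≤ 1 := min_le_left _ _
      have hδ2 : δ * (‖b‖ + ‖c‖ + 2) ≤ ε := by
        have := min_le_right 1 (ε / (‖b‖ + ‖c‖ + 2))
        calc δ * (‖b‖ + ‖c‖ + 2) ≤ (ε / (‖b‖ + ‖c‖ + 2)) * (‖b‖ + ‖c‖ + 2) :=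
              mul_le_mul_of_nonneg_right this (le_of_lt hden)
          _ = ε := div_mul_cancel₀ ε (ne_of_gt hden)
      obtain ⟨i₁, b', hb', hbb⟩ := hdense b δ hδpos
      obtain ⟨i₂, c', hc', hcc⟩ := hdense c δ hδpos
      refine ⟨i₁ + i₂ + 1, by omega, b' * p * c', ?_, ?_⟩
      · exact Submodule.subset_span ⟨b', T.lvl_mono (by omega) hb', c',
          T.lvl_mono (by omega) hc', rfl⟩
      · have hsplit : b * p * c - b' * p * c' = (b - b') * p * c + b' * p * (c - c') := by
          noncomm_ring
        have hb'norm : ‖b'‖ ≤ ‖b‖ + δ := by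
          have : ‖b'‖ - ‖b‖ ≤ ‖b - b'‖ := by
            have := norm_sub_norm_le (b - b') b
            simp only [sub_sub_cancel_left, norm_neg] at this
            calc ‖b'‖ - ‖b‖ ≤ ‖b'‖ - ‖b‖ := le_refl _
              _ ≤ ‖b' - b‖ := norm_sub_norm_le b' b
              _ = ‖b - b'‖ := norm_sub_rev b' b
          linarith [hbb.le]
        rw [hsplit]
        have hbd : ‖(b - b') * p * c + b' * p * (c - c')‖ ≤
            ‖b - b'‖ * ‖p‖ * ‖c‖ + ‖b'‖ * ‖p‖ * ‖c - c'‖ := by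
          calc ‖(b - b') * p * c + b' * p * (c - c')‖
              ≤ ‖(b - b') * p * c‖ + ‖b' * p * (c - c')‖ := norm_add_le _ _
            _ ≤ ‖b - b'‖ * ‖p‖ * ‖c‖ + ‖b'‖ * ‖p‖ * ‖c - c'‖ := by
                gcongr <;> first
                  | exact le_trans (norm_mul_le _ _)
                      (mul_le_mul_of_nonneg_right (norm_mul_le _ _) (norm_nonneg _))
        rw [hp_norm] at hbd
        simp only [mul_one, one_mul] at hbd
        have h1 : ‖b - b'‖ * ‖c‖ ≤ δ * ‖c‖ :=
          mul_le_mul_of_nonneg_right hbb.le (norm_nonneg c)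
        have h2 : ‖b'‖ * ‖c - c'‖ ≤ (‖b‖ + δ) * δ := by
          apply mul_le_mul hb'norm hcc.le (norm_nonneg _)
          positivity
        nlinarith [norm_nonneg c, norm_nonneg b, hδpos, hδ1]
    | zero =>
      intro ε hε
      exact ⟨1, le_refl 1, 0, Submodule.zero_mem _, by simpa using hε⟩
    | add x y hx hy ihx ihy =>
      intro ε hε
      obtain ⟨k₁, hk₁, y₁, hy₁, h₁⟩ := ihx (ε/2) (by positivity)
      obtain ⟨k₂, hk₂, y₂, hy₂, h₂⟩ := ihy (ε/2) (by positivity)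
      refine ⟨max k₁ k₂, by omega, y₁ + y₂,
        Submodule.add_mem _ (hTmono k₁ _ (le_max_left _ _) hy₁)
          (hTmono k₂ _ (le_max_right _ _) hy₂), ?_⟩
      have : x + y - (y₁ + y₂) = (x - y₁) + (y - y₂) := by abel
      rw [this]
      calc ‖(x - y₁) + (y - y₂)‖ ≤ ‖x - y₁‖ + ‖y - y₂‖ := norm_add_le _ _
        _ < ε := by linarith
    | smul c x hx ih =>
      intro ε hε
      have hcpos : (0:ℝ) < ‖c‖ + 1 := by positivity
      obtain ⟨k, hk, y, hy, h⟩ := ih (ε / (‖c‖ + 1)) (by positivity)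
      refine ⟨k, hk, c • y, Submodule.smul_mem _ c hy, ?_⟩
      rw [← smul_sub, norm_smul]
      calc ‖c‖ * ‖x - y‖ ≤ ‖c‖ * (ε / (‖c‖ + 1)) :=
            mul_le_mul_of_nonneg_left h.le (norm_nonneg c)
        _ < (‖c‖ + 1) * (ε / (‖c‖ + 1)) := by
            apply mul_lt_mul_of_pos_right (by linarith) (by positivity)
        _ = ε := mul_div_cancel₀ ε (ne_of_gt hcpos)
  obtain ⟨x, hxS, hx14⟩ := Metric.mem_closure_iff.1 h1_mem (1/4) (by norm_num)
  obtain ⟨k, hk1, y, hy, hxy⟩ := key x hxS (1/4) (by norm_num)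
  obtain ⟨j₀, hj₀⟩ := hcon k hk1
  have hrb : ∀ b ∈ T.lvl (a+k), (∑ u, T.e (a+k) j₀ u u) * b * p = 0 := by
    intro b hb
    induction hb using Submodule.span_induction with
    | mem w hw =>
      obtain ⟨j, s, t, rfl⟩ := hw
      by_cases hj : j₀ = j
      · subst hj
        rw [T.diag_mul_e, hp_diag k, T.e_mul_diagSum (a+k) _ j₀ s t, hj₀]
        simp
      · rw [T.diag_mul_e_ne (a+k) hj, zero_mul]
    | zero => rw [mul_zero, zero_mul]
    | add x y hx hy ihx ihy => rw [mul_add, add_mul, ihx, ihy, add_zero]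
    | smul d x hx ih => rw [mul_smul_comm, smul_mul_assoc, ih, smul_zero]
  have hry' : ∀ z ∈ Submodule.span ℂ
      {z : A | ∃ b ∈ T.lvl (a+k), ∃ c ∈ T.lvl (a+k), z = b * p * c},
      (∑ u, T.e (a+k) j₀ u u) * z = 0 := by
    intro z hz
    induction hz using Submodule.span_induction with
    | mem w hw =>
      obtain ⟨b, hb, c, hc, rfl⟩ := hw
      rw [← mul_assoc, ← mul_assoc, hrb b hb, zero_mul]
    | zero => rw [mul_zero]
    | add x y hx hy ihx ihy => rw [mul_add, ihx, ihy, add_zero]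
    | smul d x hx ih => rw [mul_smul_comm, ih, smul_zero]
  have hry : (∑ u, T.e (a+k) j₀ u u) * y = 0 := hry' y hy
  have hr1 : (∑ u, T.e (a+k) j₀ u u) = (∑ u, T.e (a+k) j₀ u u) * (1 - y) := by
    rw [mul_sub, mul_one, hry, sub_zero]
  have hnorm_r : ‖∑ u, T.e (a+k) j₀ u u‖ = 1 := T.norm_diag (a+k) j₀
  have h1y : ‖(1:A) - y‖ < 1/2 := by
    have hsplit : (1:A) - y = (1 - x) + (x - y) := by abel
    rw [hsplit]
    calc ‖((1:A) - x) + (x - y)‖ ≤ ‖(1:A) - x‖ + ‖x - y‖ := norm_add_le _ _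
      _ < 1/2 := by rw [dist_eq_norm] at hx14; linarith
  have hfin : (1:ℝ) ≤ 1 * ‖(1:A) - y‖ := by
    calc (1:ℝ) = ‖∑ u, T.e (a+k) j₀ u u‖ := hnorm_r.symm
      _ = ‖(∑ u, T.e (a+k) j₀ u u) * (1 - y)‖ := by rw [← hr1]
      _ ≤ ‖∑ u, T.e (a+k) j₀ u u‖ * ‖(1:A) - y‖ := norm_mul_le _ _
      _ = 1 * ‖(1:A) - y‖ := by rw [hnorm_r]
  linarith

open scoped Classical in
theorem growth_step
    (hA_eq : closure (⋃ i : ℕ,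
      (Submodule.span ℂ {x : A | ∃ j s t, x = T.e i j s t} : Set A)) = Set.univ)
    (hA_simple : ∀ I : TwoSidedIdeal A, IsClosed (I : Set A) → I = ⊥ ∨ I = ⊤)
    (a : ℕ) :
    ∃ b, a < b ∧ ∀ j : Fin (T.K b), ∑ j'' : Fin (T.K a), T.n a j'' ≤ T.n b j := by
  choose kf hk1 hkne using T.connectivity hA_eq hA_simple a
  set k₁ : ℕ := 1 + Finset.univ.sup kf with hk₁def
  have hk₁ : ∀ α, kf α ≤ k₁ := fun α => le_trans (Finset.le_sup (Finset.mem_univ α)) (by omega)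
  have hne : ∀ α j, (T.G a (T.bse a α) k₁ j).Nonempty :=
    fun α => T.G_nonempty_le (hk₁ α) (hkne α)
  refine ⟨a + k₁, by omega, ?_⟩
  intro j
  have hdisj : ∀ α β : Σ j'' : Fin (T.K a), Fin (T.n a j''), α ≠ β →
      Disjoint (T.G a (T.bse a α) k₁ j) (T.G a (T.bse a β) k₁ j) :=
    fun α β h => T.G_disjoint (T.bse_disjoint h) k₁ j
  have hcard : ∑ α : Σ j'' : Fin (T.K a), Fin (T.n a j''),
      (T.G a (T.bse a α) k₁ j).card ≤ T.n (a + k₁) j := by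
    rw [← Finset.card_biUnion (fun α _ β _ h => hdisj α β h)]
    calc (Finset.univ.biUnion fun α => T.G a (T.bse a α) k₁ j).card
        ≤ Fintype.card (Fin (T.n (a + k₁) j)) := Finset.card_le_univ _
      _ = T.n (a + k₁) j := Fintype.card_fin _
  calc ∑ j'' : Fin (T.K a), T.n a j''
      = Fintype.card (Σ j'' : Fin (T.K a), Fin (T.n a j'')) := by
        rw [Fintype.card_sigma]; simp
    _ = ∑ α : Σ j'' : Fin (T.K a), Fin (T.n a j''), 1 := by
        rw [Finset.sum_const, smul_eq_mul, mul_one, Finset.card_univ]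
    _ ≤ ∑ α : Σ j'' : Fin (T.K a), Fin (T.n a j''), (T.G a (T.bse a α) k₁ j).card :=
        Finset.sum_le_sum fun α _ => (Finset.card_pos).2 (hne α j)
    _ ≤ T.n (a + k₁) j := hcard

theorem exists_le_n {b : ℕ} (j : Fin (T.K (b+1))) :
    ∃ j'' : Fin (T.K b), T.n b j'' ≤ T.n (b+1) j := by
  have hsurj := (T.L_bij b j).2
  obtain ⟨x₀, -⟩ := hsurj (Fin.mk 0 (T.n_pos (b+1) j))
  refine ⟨x₀.1, ?_⟩
  rw [T.n_succ b j]
  calc T.n b x₀.1 ≤ T.m b x₀.1 j * T.n b x₀.1 := by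
        have : 1 ≤ T.m b x₀.1 j := by
          have := x₀.2.1.isLt
          omega
        nlinarith
    _ ≤ ∑ j'' : Fin (T.K b), T.m b j'' j * T.n b j'' :=
        Finset.single_le_sum (f := fun j'' => T.m b j'' j * T.n b j'')
          (fun j'' _ => Nat.zero_le _) (Finset.mem_univ x₀.1)

theorem min_le_of_le {a b : ℕ} (hab : a ≤ b) (j : Fin (T.K b)) :
    ∃ j'' : Fin (T.K a), T.n a j'' ≤ T.n b j := by
  induction b with
  | zero =>
    have : a = 0 := by omega
    subst this; exact ⟨j, le_refl _⟩
  | succ b ih =>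
    rcases Nat.lt_or_ge a (b+1) with h | h
    · obtain ⟨j₁, hj₁⟩ := T.exists_le_n j
      obtain ⟨j₂, hj₂⟩ := ih (by omega) j₁
      exact ⟨j₂, le_trans hj₂ hj₁⟩
    · have : a = b + 1 := by omega
      subst this; exact ⟨j, le_refl _⟩

instance lvl_findim (i : ℕ) : FiniteDimensional ℂ (T.lvl i) := by
  rw [lvl]
  have hset : {x : A | ∃ j s t, x = T.e i j s t} =
      Set.range (fun x : Σ j : Fin (T.K i), Fin (T.n i j) × Fin (T.n i j) =>
        T.e i x.1 x.2.1 x.2.2) := by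
    ext x
    constructor
    · rintro ⟨j, s, t, rfl⟩; exact ⟨⟨j, s, t⟩, rfl⟩
    · rintro ⟨⟨j, s, t⟩, rfl⟩; exact ⟨j, s, t, rfl⟩
  rw [hset]
  exact FiniteDimensional.span_of_finite ℂ (Set.finite_range _)

open scoped Classical in
theorem lvl_finrank (i : ℕ) :
    Module.finrank ℂ (T.lvl i) ≤ (∑ j : Fin (T.K i), T.n i j) ^ 2 := by
  set f : (Σ j : Fin (T.K i), Fin (T.n i j) × Fin (T.n i j)) → A :=
    fun x => T.e i x.1 x.2.1 x.2.2 with hf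
  have hset : {x : A | ∃ j s t, x = T.e i j s t} = ↑(Finset.univ.image f) := by
    ext x
    simp only [Finset.coe_image, Finset.coe_univ, Set.image_univ, Set.mem_range,
      Set.mem_setOf_eq]
    constructor
    · rintro ⟨j, s, t, rfl⟩; exact ⟨⟨j, s, t⟩, rfl⟩
    · rintro ⟨⟨j, s, t⟩, rfl⟩; exact ⟨j, s, t, rfl⟩
  have h1 : Module.finrank ℂ (T.lvl i) ≤ (Finset.univ.image f).card := by
    rw [lvl, hset]
    exact finrank_span_finset_le_card _
  have h2 : (Finset.univ.image f).card ≤ ∑ j : Fin (T.K i), T.n i j * T.n i j := by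
    calc (Finset.univ.image f).card ≤ Finset.univ.card := Finset.card_image_le
      _ = Fintype.card (Σ j : Fin (T.K i), Fin (T.n i j) × Fin (T.n i j)) := Finset.card_univ
      _ = ∑ j : Fin (T.K i), T.n i j * T.n i j := by
          rw [Fintype.card_sigma]; simp
  have h3 : ∑ j : Fin (T.K i), T.n i j * T.n i j ≤ (∑ j : Fin (T.K i), T.n i j) ^ 2 := by
    rw [pow_two, Finset.sum_mul]
    refine Finset.sum_le_sum fun j _ => ?_
    exact Nat.mul_le_mul_left _ (Finset.single_le_sum (f := fun j' => T.n i j')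
      (fun j' _ => Nat.zero_le _) (Finset.mem_univ j))
  omega

theorem not_all_lvl_le
    (hA_eq : closure (⋃ i : ℕ,
      (Submodule.span ℂ {x : A | ∃ j s t, x = T.e i j s t} : Set A)) = Set.univ)
    (hA_infdim : ¬ FiniteDimensional ℂ A)
    (W : Submodule ℂ A) [FiniteDimensional ℂ W] (hW : ∀ i, T.lvl i ≤ W) : False := by
  have hA_eq' : closure (⋃ i : ℕ, ((T.lvl i : Submodule ℂ A) : Set A)) = Set.univ := hA_eq
  have hclosed : IsClosed (W : Set A) := Submodule.closed_of_finiteDimensional W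
  have hsub : closure (⋃ i, ((T.lvl i : Submodule ℂ A) : Set A)) ⊆ (W : Set A) := by
    rw [← hclosed.closure_eq]
    exact closure_mono (Set.iUnion_subset fun i => hW i)
  have hTop : W = ⊤ := by
    rw [eq_top_iff]
    intro x _
    exact hsub (by rw [hA_eq']; trivial)
  subst hTop
  exact hA_infdim (Submodule.topEquiv.finiteDimensional)

theorem exists_big_level
    (hA_eq : closure (⋃ i : ℕ,
      (Submodule.span ℂ {x : A | ∃ j s t, x = T.e i j s t} : Set A)) = Set.univ)
    (hA_simple : ∀ I : TwoSidedIdeal A, IsClosed (I : Set A) → I = ⊥ ∨ I = ⊤)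
    (hA_infdim : ¬ FiniteDimensional ℂ A)
    (a₀ D : ℕ) :
    ∃ b, a₀ ≤ b ∧ ∀ j : Fin (T.K b), D ≤ T.n b j := by
  choose bf hbf1 hbf2 using T.growth_step hA_eq hA_simple
  set seq : ℕ → ℕ := fun t => Nat.rec a₀ (fun _ prev => bf prev) t with hseq
  have hmono : ∀ t, seq t < seq (t+1) := fun t => hbf1 (seq t)
  have hge : ∀ t, a₀ + t ≤ seq t := by
    intro t
    induction t with
    | zero => simp [hseq]
    | succ t ih => have := hmono t; omega
  have hstep : ∀ t (j : Fin (T.K (seq (t+1)))),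
      (∑ j'' : Fin (T.K (seq t)), T.n (seq t) j'') ≤ T.n (seq (t+1)) j :=
    fun t => hbf2 (seq t)
  by_cases hD : ∃ t, D ≤ ∑ j'' : Fin (T.K (seq t)), T.n (seq t) j''
  · obtain ⟨t, ht⟩ := hD
    exact ⟨seq (t+1), by have := hge (t+1); omega, fun j => le_trans ht (hstep t j)⟩
  · push_neg at hD
    exfalso
    have hrank : ∀ t, Module.finrank ℂ (T.lvl (seq t)) ≤ D^2 := by
      intro t
      refine le_trans (T.lvl_finrank (seq t)) (Nat.pow_le_pow_left (hD t).le 2)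
    set R : Set ℕ := Set.range (fun t => Module.finrank ℂ (T.lvl (seq t))) with hR
    have hRne : R.Nonempty := ⟨_, ⟨0, rfl⟩⟩
    have hRbdd : BddAbove R := ⟨D^2, by rintro r ⟨t, rfl⟩; exact hrank t⟩
    obtain ⟨t₀, ht₀⟩ := Nat.sSup_mem hRne hRbdd
    have hseqmono : Monotone seq := monotone_nat_of_le_succ fun t => (hmono t).le
    have heq : ∀ t, t₀ ≤ t → T.lvl (seq t₀) = T.lvl (seq t) := by
      intro t ht
      have hle : T.lvl (seq t₀) ≤ T.lvl (seq t) := T.lvl_mono (hseqmono ht)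
      have hr : Module.finrank ℂ (T.lvl (seq t)) ≤ Module.finrank ℂ (T.lvl (seq t₀)) := by
        have ht₀' : Module.finrank ℂ (T.lvl (seq t₀)) = sSup R := ht₀
        rw [ht₀']
        exact le_csSup hRbdd ⟨t, rfl⟩
      exact Submodule.eq_of_le_of_finrank_le hle hr
    have hall : ∀ i, T.lvl i ≤ T.lvl (seq t₀) := by
      intro i
      have h1 : i ≤ seq (t₀ + i) := by have := hge (t₀ + i); omega
      calc T.lvl i ≤ T.lvl (seq (t₀ + i)) := T.lvl_mono h1
        _ = T.lvl (seq t₀) := (heq _ (by omega)).symm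
    exact T.not_all_lvl_le hA_eq hA_infdim _ hall

theorem mult_set_eq (a k : ℕ) (α : Σ j : Fin (T.K a), Fin (T.n a j)) (j : Fin (T.K (a+k))) :
    {s : Fin (T.n (a+k) j) | T.e (a+k) j s s * T.e a α.1 α.2 α.2 = T.e (a+k) j s s} =
      ↑(T.G a (T.bse a α) k j) := by
  ext s
  simp only [Set.mem_setOf_eq, Finset.mem_coe]
  rw [T.e_eq_G_sum a α k, T.e_mul_diagSum (a+k) _ j s s]
  constructor
  · intro h
    by_contra hs
    rw [if_neg hs] at h
    exact T.e_ne_zero _ _ _ _ h.symm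
  · intro hs
    rw [if_pos hs]

end MatrixUnitTower

/-- The multiplicity `m_{i₀,i;j',j}` is realized as the number of
`s` with `e i j s s * e i₀ j' 0 0 = e i j s s` (`0` being the first index, i.e. the
paper's `e^{(i₀)}_{j';1,1}`). -/
theorem exists_large_multiplicities
    {A : Type*} [CStarAlgebra A] (T : MatrixUnitTower A)
    (hA_eq : closure (⋃ i : ℕ,
      (Submodule.span ℂ {x : A | ∃ j s t, x = T.e i j s t} : Set A)) = Set.univ)
    (hA_infdim : ¬ FiniteDimensional ℂ A)
    (hA_simple : ∀ I : TwoSidedIdeal A, IsClosed (I : Set A) → I = ⊥ ∨ I = ⊤) :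
    ∀ i₀ N : ℕ, ∃ i : ℕ, i₀ < i ∧
      ∀ (j' : Fin (T.K i₀)) (j : Fin (T.K i)),
        N < Set.ncard {s : Fin (T.n i j) |
          T.e i j s s * T.e i₀ j' ⟨0, T.n_pos i₀ j'⟩ ⟨0, T.n_pos i₀ j'⟩ = T.e i j s s} := by
  intro i₀ N
  choose kf hk1 hkne using fun j' : Fin (T.K i₀) =>
    T.connectivity hA_eq hA_simple i₀ ⟨j', ⟨0, T.n_pos i₀ j'⟩⟩
  set k₁ : ℕ := 1 + Finset.univ.sup kf with hk₁def
  have hk₁ : ∀ j', kf j' ≤ k₁ := fun j' =>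
    le_trans (Finset.le_sup (Finset.mem_univ j')) (by omega)
  have hne : ∀ (j' : Fin (T.K i₀)) (j : Fin (T.K (i₀+k₁))),
      (T.G i₀ (T.bse i₀ ⟨j', ⟨0, T.n_pos i₀ j'⟩⟩) k₁ j).Nonempty :=
    fun j' => T.G_nonempty_le (hk₁ j') (hkne j')
  set C : ℕ := Finset.univ.sup (fun j : Fin (T.K (i₀+k₁)) => T.n (i₀+k₁) j) with hCdef
  have hC : ∀ j : Fin (T.K (i₀+k₁)), T.n (i₀+k₁) j ≤ C :=
    fun j => Finset.le_sup (Finset.mem_univ j)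
  have cardb : ∀ j' : Fin (T.K i₀), ∀ k, k₁ ≤ k → ∀ j : Fin (T.K (i₀+k)),
      T.n (i₀+k) j ≤ C * (T.G i₀ (T.bse i₀ ⟨j', ⟨0, T.n_pos i₀ j'⟩⟩) k j).card := by
    intro j' k hk
    induction k, hk using Nat.le_induction with
    | base =>
      intro j
      have h1 : 1 ≤ (T.G i₀ (T.bse i₀ ⟨j', ⟨0, T.n_pos i₀ j'⟩⟩) k₁ j).card :=
        Finset.card_pos.2 (hne j' j)
      calc T.n (i₀+k₁) j ≤ C := hC j
        _ ≤ C * _ := Nat.le_mul_of_pos_right _ (by omega)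
    | succ k hk ih =>
      intro j
      have hn : T.n (i₀ + (k+1)) j =
          ∑ j'' : Fin (T.K (i₀+k)), T.m (i₀+k) j'' j * T.n (i₀+k) j'' := T.n_succ (i₀+k) j
      rw [T.G_succ_card, hn, Finset.mul_sum]
      refine Finset.sum_le_sum fun j'' _ => ?_
      calc T.m (i₀+k) j'' j * T.n (i₀+k) j''
          ≤ T.m (i₀+k) j'' j * (C * (T.G i₀ (T.bse i₀ ⟨j', ⟨0, T.n_pos i₀ j'⟩⟩) k j'').card) :=
            Nat.mul_le_mul_left _ (ih j'')
        _ = C * (T.m (i₀+k) j'' j * (T.G i₀ (T.bse i₀ ⟨j', ⟨0, T.n_pos i₀ j'⟩⟩) k j'').card) := by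
            ring
  obtain ⟨b, hb, hbig⟩ := T.exists_big_level hA_eq hA_simple hA_infdim (i₀+k₁) (N*C+1)
  obtain ⟨k, rfl⟩ : ∃ k, b = i₀ + k := ⟨b - i₀, by omega⟩
  have hkk₁ : k₁ ≤ k := by omega
  refine ⟨i₀ + k, by omega, ?_⟩
  intro j' j
  have hseteq : {s : Fin (T.n (i₀+k) j) |
      T.e (i₀+k) j s s * T.e i₀ j' ⟨0, T.n_pos i₀ j'⟩ ⟨0, T.n_pos i₀ j'⟩ = T.e (i₀+k) j s s} =
      ↑(T.G i₀ (T.bse i₀ ⟨j', ⟨0, T.n_pos i₀ j'⟩⟩) k j) :=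
    T.mult_set_eq i₀ k ⟨j', ⟨0, T.n_pos i₀ j'⟩⟩ j
  rw [hseteq, Set.ncard_coe_finset]
  have h1 : N * C + 1 ≤ C * (T.G i₀ (T.bse i₀ ⟨j', ⟨0, T.n_pos i₀ j'⟩⟩) k j).card :=
    le_trans (hbig j) (cardb j' k hkk₁ j)
  by_contra hcon
  push_neg at hcon
  have h2 : C * (T.G i₀ (T.bse i₀ ⟨j', ⟨0, T.n_pos i₀ j'⟩⟩) k j).card ≤ C * N :=
    Nat.mul_le_mul_left _ hcon
  have h3 : N * C + 1 ≤ N * C := by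
    rw [mul_comm C N] at h2
    omega
  exact Nat.not_succ_le_self (N * C) h3
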